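/- Let d ≥ 2 and let a_1, …, a_d be positive integers with gcd(a_i, a_j) = 1 for all i ≠ j. Let T(x) denote the number of tuples (x_1, …, x_d) ∈ ℕ^d with x_1·a_1 + … + x_d·a_d = x, and set P = a_1·a_2·⋯·a_d. Then T(x)/x^{d-1} tends to 1/((d−1)!·P) as x → ∞ over the natural numbers. -/

import Mathlib

open Filter Finset

/-- Tuples in `Fin d → ℕ` with sum at most `n`. -/
def boxLe (d n : ℕ) : Finset (Fin d → ℕ) :=
  (Finset.range (n+1)).biUnion (Finset.Nat.antidiagonalTuple d)

lemma mem_boxLe {d n : ℕ} {g : Fin d → ℕ} : g ∈ boxLe d n ↔ ∑ i, g i ≤ n := by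
  simp only [boxLe, Finset.mem_biUnion, Finset.mem_range,
    Finset.Nat.mem_antidiagonalTuple]
  constructor
  · rintro ⟨y, hy, rfl⟩; omega
  · intro h; exact ⟨∑ i, g i, by omega, rfl⟩

lemma card_boxLe (d n : ℕ) : (boxLe d n).card = (n + d).choose d := by
  induction d generalizing n with
  | zero =>
    rw [Nat.choose_zero_right]
    have : boxLe 0 n = {fun i => i.elim0} := by
      ext g
      simp only [mem_boxLe, Finset.mem_singleton]
      constructor
      · intro _; funext i; exact i.elim0
      · intro h; simp [h]
    simp [this]
  | succ d ih =>
    have hfib : ∀ k ∈ Finset.range (n+1),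
        ((boxLe (d+1) n).filter (fun g => g 0 = k)).card = (boxLe d (n - k)).card := by
      intro k hk
      rw [Finset.mem_range] at hk

      refine Finset.card_bij' (fun g _ => Fin.tail g) (fun g _ => Fin.cons k g) ?_ ?_ ?_ ?_
      · intro g hg
        simp only [Finset.mem_filter, mem_boxLe] at hg
        rw [mem_boxLe, show ∑ i : Fin d, Fin.tail g i = ∑ i : Fin d, g i.succ from rfl]
        have h := Fin.sum_univ_succ g
        omega
      · intro g hg
        rw [mem_boxLe] at hg
        simp only [Finset.mem_filter, mem_boxLe, Fin.cons_zero, and_true]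
        rw [Fin.sum_univ_succ]
        simp only [Fin.cons_zero, Fin.cons_succ]
        omega
      · intro g hg
        simp only [Finset.mem_filter] at hg
        obtain ⟨-, rfl⟩ := hg
        exact Fin.cons_self_tail g
      · intro g hg
        funext i
        simp [Fin.tail]
    have hsum : (boxLe (d+1) n).card = ∑ k ∈ Finset.range (n+1), (boxLe d (n-k)).card := by
      rw [Finset.card_eq_sum_card_fiberwise (f := fun g => g 0) (t := Finset.range (n+1))]
      · exact Finset.sum_congr rfl hfib
      · intro g hg
        rw [Finset.mem_coe, mem_boxLe] at hg
        rw [Finset.mem_coe, Finset.mem_range]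
        show g 0 < n + 1
        have : g 0 ≤ ∑ i, g i := Finset.single_le_sum (fun i _ => Nat.zero_le _) (Finset.mem_univ 0)
        omega
    have h1 : ∑ k ∈ Finset.range (n+1), (boxLe d (n-k)).card
        = ∑ k ∈ Finset.range (n+1), ((n-k) + d).choose d :=
      Finset.sum_congr rfl (fun k hk => ih _)
    have h2 := Finset.sum_range_reflect (fun j => (j + d).choose d) (n+1)
    simp only [Nat.add_sub_cancel] at h2
    rw [hsum, h1, h2, Nat.sum_range_add_choose, Nat.add_assoc]

variable {d : ℕ}

/-- Tuples with weighted sum exactly `x`. -/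
def solE (a : Fin d → ℕ) (x : ℕ) : Finset (Fin d → ℕ) :=
  (boxLe d x).filter (fun f => ∑ i, f i * a i = x)

/-- Tuples with weighted sum at most `x`. -/
def solL (a : Fin d → ℕ) (x : ℕ) : Finset (Fin d → ℕ) :=
  (boxLe d x).filter (fun f => ∑ i, f i * a i ≤ x)

lemma sum_le_weighted {a : Fin d → ℕ} (ha : ∀ i, 0 < a i) (f : Fin d → ℕ) :
    ∑ i, f i ≤ ∑ i, f i * a i :=
  Finset.sum_le_sum fun i _ => Nat.le_mul_of_pos_right _ (ha i)

lemma mem_solE {a : Fin d → ℕ} (ha : ∀ i, 0 < a i) {x : ℕ} {f : Fin d → ℕ} :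
    f ∈ solE a x ↔ ∑ i, f i * a i = x := by
  simp only [solE, Finset.mem_filter, mem_boxLe, and_iff_right_iff_imp]
  intro h
  exact le_trans (sum_le_weighted ha f) h.le

lemma mem_solL {a : Fin d → ℕ} (ha : ∀ i, 0 < a i) {x : ℕ} {f : Fin d → ℕ} :
    f ∈ solL a x ↔ ∑ i, f i * a i ≤ x := by
  simp only [solL, Finset.mem_filter, mem_boxLe, and_iff_right_iff_imp]
  intro h
  exact le_trans (sum_le_weighted ha f) h

lemma boxLe_card_le {a : Fin d → ℕ} (ha : ∀ i, 0 < a i) (x : ℕ) :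
    (boxLe d x).card ≤ (solL a x).card * ∏ i, a i := by
  classical
  have := Finset.card_le_card_of_injOn
    (f := fun g => ((fun i => g i / a i, fun i => g i % a i) : (Fin d → ℕ) × (Fin d → ℕ)))
    (s := boxLe d x)
    (t := (solL a x) ×ˢ (Fintype.piFinset (fun i => Finset.range (a i))))
    ?_ ?_
  · calc (boxLe d x).card ≤ _ := this
    _ = (solL a x).card * ∏ i, a i := by
        rw [Finset.card_product, Fintype.card_piFinset]
        simp [Finset.card_range]
  · intro g hg
    rw [Finset.mem_coe, mem_boxLe] at hg
    rw [Finset.mem_coe, Finset.mem_product]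
    constructor
    · rw [mem_solL ha]
      calc ∑ i, g i / a i * a i ≤ ∑ i, g i :=
            Finset.sum_le_sum fun i _ => Nat.div_mul_le_self _ _
        _ ≤ x := hg
    · rw [Fintype.mem_piFinset]
      intro i
      rw [Finset.mem_range]
      exact Nat.mod_lt _ (ha i)
  · intro g₁ h₁ g₂ h₂ h
    simp only [Prod.mk.injEq] at h
    funext i
    have h1 := congrFun h.1 i
    have h2 := congrFun h.2 i
    have e1 := Nat.div_add_mod (g₁ i) (a i)
    have e2 := Nat.div_add_mod (g₂ i) (a i)
    rw [h1, h2] at e1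
    omega

lemma solL_card_mul_le {a : Fin d → ℕ} (ha : ∀ i, 0 < a i) (x : ℕ) :
    (solL a x).card * ∏ i, a i ≤ (boxLe d (x + ∑ i, a i)).card := by
  classical
  have key := Finset.card_le_card_of_injOn
    (f := fun p : (Fin d → ℕ) × (Fin d → ℕ) => fun i => p.1 i * a i + p.2 i)
    (s := (solL a x) ×ˢ (Fintype.piFinset (fun i => Finset.range (a i))))
    (t := boxLe d (x + ∑ i, a i)) ?_ ?_
  · calc (solL a x).card * ∏ i, a i
        = ((solL a x) ×ˢ (Fintype.piFinset (fun i => Finset.range (a i)))).card := by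
          rw [Finset.card_product, Fintype.card_piFinset]
          simp [Finset.card_range]
    _ ≤ _ := key
  · rintro ⟨f, r⟩ hp
    rw [Finset.mem_coe, Finset.mem_product, mem_solL ha, Fintype.mem_piFinset] at hp
    rw [Finset.mem_coe, mem_boxLe]
    calc ∑ i, (f i * a i + r i) = (∑ i, f i * a i) + ∑ i, r i := Finset.sum_add_distrib
      _ ≤ x + ∑ i, a i := by
          apply Nat.add_le_add hp.1
          exact Finset.sum_le_sum fun i _ => le_of_lt (Finset.mem_range.1 (hp.2 i))
  · rintro ⟨f₁, r₁⟩ h₁ ⟨f₂, r₂⟩ h₂ h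
    simp only [Finset.mem_coe, Finset.mem_product, Fintype.mem_piFinset] at h₁ h₂
    have hr₁ : ∀ i, r₁ i < a i := fun i => Finset.mem_range.1 (h₁.2 i)
    have hr₂ : ∀ i, r₂ i < a i := fun i => Finset.mem_range.1 (h₂.2 i)
    have hfr : ∀ i, f₁ i * a i + r₁ i = f₂ i * a i + r₂ i := fun i => congrFun h i
    have hf : ∀ i, f₁ i = f₂ i ∧ r₁ i = r₂ i := by
      intro i
      have h' := hfr i
      have d1 : (f₁ i * a i + r₁ i) / a i = f₁ i := by
        rw [Nat.mul_comm, Nat.mul_add_div (ha i), Nat.div_eq_of_lt (hr₁ i), Nat.add_zero]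
      have d2 : (f₂ i * a i + r₂ i) / a i = f₂ i := by
        rw [Nat.mul_comm, Nat.mul_add_div (ha i), Nat.div_eq_of_lt (hr₂ i), Nat.add_zero]
      have hfi : f₁ i = f₂ i := by rw [← d1, ← d2, h']
      rw [hfi] at h'
      exact ⟨hfi, by omega⟩
    have e1 : f₁ = f₂ := funext fun i => (hf i).1
    have e2 : r₁ = r₂ := funext fun i => (hf i).2
    rw [e1, e2]

lemma solL_card_eq_sum {a : Fin d → ℕ} (ha : ∀ i, 0 < a i) (x : ℕ) :
    (solL a x).card = ∑ y ∈ Finset.range (x+1), (solE a y).card := by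
  classical
  have H : ∀ g ∈ solL a x, (∑ i, g i * a i) ∈ Finset.range (x+1) :=
    fun g hg => Finset.mem_range.2 (Nat.lt_succ_of_le ((mem_solL ha).1 hg))
  rw [Finset.card_eq_sum_card_fiberwise H]
  apply Finset.sum_congr rfl
  intro y hy
  rw [Finset.mem_range] at hy
  congr 1
  ext f
  simp only [Finset.mem_filter, mem_solL ha, mem_solE ha]
  omega

lemma solE_card_mono {a : Fin d → ℕ} (ha : ∀ i, 0 < a i) {c : Fin d → ℕ} {m : ℕ}
    (hc : ∑ i, c i * a i = m) (x : ℕ) : (solE a x).card ≤ (solE a (x+m)).card := by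
  classical
  apply Finset.card_le_card_of_injOn (f := fun f => f + c)
  · intro f hf
    rw [Finset.mem_coe, mem_solE ha] at hf ⊢
    calc ∑ i, (f + c) i * a i = ∑ i, (f i * a i + c i * a i) := by
          apply Finset.sum_congr rfl; intro i _; simp [add_mul]
      _ = (∑ i, f i * a i) + ∑ i, c i * a i := Finset.sum_add_distrib
      _ = x + m := by rw [hf, hc]
  · intro f₁ _ f₂ _ h
    funext i
    have := congrFun h i
    simp only [Pi.add_apply] at this
    omega

lemma two_var_rep {p q N : ℕ} (hp : 1 ≤ p) (hq : 1 ≤ q) (hpq : Nat.Coprime p q)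
    (hN : p * q ≤ N) : ∃ u v, u * p + v * q = N := by
  rcases eq_or_lt_of_le hp with h1 | h1
  · exact ⟨N, 0, by rw [← h1]; simp⟩
  rcases eq_or_lt_of_le hq with h2 | h2
  · exact ⟨0, N, by rw [← h2]; simp⟩
  have hfrob := frobeniusNumber_pair hpq h1 h2
  have hmem : N ∈ AddSubmonoid.closure ({p, q} : Set ℕ) := by
    by_contra hN'
    have := hfrob.2 hN'
    have hpq2 : p + q ≤ p * q := Nat.add_le_mul h1 h2
    omega
  rw [AddSubmonoid.mem_closure_pair] at hmem
  obtain ⟨u, v, huv⟩ := hmem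
  exact ⟨u, v, by simpa [smul_eq_mul] using huv⟩

lemma choose_telescope (k : ℕ) {b c : ℕ} (h : c ≤ b) :
    c.choose (k+1) + ∑ m ∈ Finset.Ico c b, m.choose k = b.choose (k+1) := by
  induction b, h using Nat.le_induction with
  | base => simp
  | succ b hb ih =>
    rw [Finset.sum_Ico_succ_top hb, ← Nat.add_assoc, ih, Nat.choose_succ_succ' b k]
    exact Nat.add_comm _ _

set_option maxHeartbeats 2000000 in
/-- For `d ≥ 2` pairwise coprime positive integers `a 0, …, a (d-1)` with product `P`,
the denumerant `T` satisfies `T x / x^(d-1) → 1/((d-1)!·P)` as `x → ∞`. -/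
theorem denumerant_asymptotic (d : ℕ) (hd : 2 ≤ d) (a : Fin d → ℕ) (ha : ∀ i, 0 < a i)
    (hcop : ∀ i j, i ≠ j → Nat.Coprime (a i) (a j))
    (T : ℕ → ℕ) (hT : ∀ x, T x = {f : Fin d → ℕ | ∑ i, f i * a i = x}.ncard)
    (P : ℕ) (hP : P = ∏ i, a i) :
    Tendsto (fun x : ℕ => (T x : ℝ) / (x : ℝ) ^ (d - 1)) atTop
      (nhds (1 / (Nat.factorial (d - 1) * P))) := by
  classical
  obtain ⟨k, rfl⟩ : ∃ k, d = k + 1 := ⟨d - 1, by omega⟩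
  simp only [Nat.add_sub_cancel]
  have hTcard : ∀ x, T x = (solE a x).card := by
    intro x
    rw [hT x]
    have : {f : Fin (k+1) → ℕ | ∑ i, f i * a i = x} = ↑(solE a x) := by
      ext f; simp [mem_solE ha]
    rw [this, Set.ncard_coe_finset]
  have hPpos : 0 < P := hP ▸ Finset.prod_pos (fun i _ => ha i)
  have h0 : (0:ℕ) < k + 1 := by omega
  have h1 : (1:ℕ) < k + 1 := by omega
  set i0 : Fin (k+1) := ⟨0, h0⟩ with hi0
  set i1 : Fin (k+1) := ⟨1, h1⟩ with hi1
  have hne : i0 ≠ i1 := Fin.ne_of_val_ne (by simp [hi0, hi1])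
  set F := a i0 * a i1 with hFdef
  set A := ∑ i, a i with hAdef
  -- every m ≥ F is representable
  have hrep : ∀ m, F ≤ m → ∃ c : Fin (k+1) → ℕ, ∑ i, c i * a i = m := by
    intro m hm
    obtain ⟨u, v, huv⟩ := two_var_rep (ha i0) (ha i1) (hcop i0 i1 hne) hm
    have e : ∀ (j : Fin (k+1)) (w : ℕ), ∑ i, (Pi.single j w : Fin (k+1) → ℕ) i * a i = w * a j := by
      intro j w
      rw [Finset.sum_eq_single j]
      · rw [Pi.single_eq_same]
      · intro i _ hij; rw [Pi.single_eq_of_ne hij, Nat.zero_mul]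
      · intro h; exact absurd (Finset.mem_univ j) h
    refine ⟨fun i => (Pi.single i0 u : Fin (k+1) → ℕ) i + (Pi.single i1 v : Fin (k+1) → ℕ) i, ?_⟩
    calc ∑ i, ((Pi.single i0 u : Fin (k+1) → ℕ) i + (Pi.single i1 v : Fin (k+1) → ℕ) i) * a i
        = ∑ i, ((Pi.single i0 u : Fin (k+1) → ℕ) i * a i
            + (Pi.single i1 v : Fin (k+1) → ℕ) i * a i) := by
          apply Finset.sum_congr rfl; intro i _; rw [Nat.add_mul]
      _ = (∑ i, (Pi.single i0 u : Fin (k+1) → ℕ) i * a i)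
            + ∑ i, (Pi.single i1 v : Fin (k+1) → ℕ) i * a i :=
          Finset.sum_add_distrib
      _ = u * a i0 + v * a i1 := by rw [e, e]
      _ = m := huv
  have hmono : ∀ x y : ℕ, x + F ≤ y → (solE a x).card ≤ (solE a y).card := by
    intro x y hxy
    obtain ⟨c, hc⟩ := hrep (y - x) (by omega)
    have := solE_card_mono ha hc x
    rwa [Nat.add_sub_cancel' (by omega : x ≤ y)] at this
  have hup : ∀ z, P * (solL a z).card ≤ (z + A + (k+1)).choose (k+1) := by
    intro z
    calc P * (solL a z).card = (solL a z).card * ∏ i, a i := by rw [Nat.mul_comm, hP]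
      _ ≤ (boxLe (k+1) (z + A)).card := solL_card_mul_le ha z
      _ = (z + A + (k+1)).choose (k+1) := card_boxLe _ _
  have hlo : ∀ z, (z + (k+1)).choose (k+1) ≤ P * (solL a z).card := by
    intro z
    calc (z + (k+1)).choose (k+1) = (boxLe (k+1) z).card := (card_boxLe _ _).symm
      _ ≤ (solL a z).card * ∏ i, a i := boxLe_card_le ha z
      _ = P * (solL a z).card := by rw [Nat.mul_comm, hP]
  have hsplit : ∀ u v : ℕ, u ≤ v → (solL a v).card
      = (solL a u).card + ∑ y ∈ Finset.Ico (u+1) (v+1), (solE a y).card := by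
    intro u v huv
    rw [solL_card_eq_sum ha v, solL_card_eq_sum ha u, Finset.range_eq_Ico, Finset.range_eq_Ico]
    exact (Finset.sum_Ico_consecutive (fun y => (solE a y).card) (Nat.zero_le (u+1))
      (by omega : u+1 ≤ v+1)).symm
  -- key upper bound
  have keyUB : ∀ h x : ℕ, Nat.factorial k * (P * (h * T x))
      ≤ (h + A) * (x + (F + h + A + (k+1)))^k := by
    intro h x
    have step1 : (solL a (x+F)).card + h * T x ≤ (solL a (x+F+h)).card := by
      rw [hsplit (x+F) (x+F+h) (by omega)]
      apply Nat.add_le_add_left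
      have hcount : h * T x = (Finset.Ico (x+F+1) (x+F+h+1)).card • (T x) := by
        rw [Nat.card_Ico, smul_eq_mul]; congr 1; omega
      rw [hcount]
      apply Finset.card_nsmul_le_sum
      intro y hy
      rw [Finset.mem_Ico] at hy
      rw [hTcard]
      exact hmono x y (by omega)
    have step2 : (x + F + (k+1)).choose (k+1) + P * (h * T x)
        ≤ (x + F + h + A + (k+1)).choose (k+1) := by
      calc (x+F+(k+1)).choose (k+1) + P * (h * T x)
          ≤ P * (solL a (x+F)).card + P * (h*T x) := Nat.add_le_add_right (hlo _) _
        _ = P * ((solL a (x+F)).card + h * T x) := (Nat.mul_add _ _ _).symm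
        _ ≤ P * (solL a (x+F+h)).card := Nat.mul_le_mul_left _ step1
        _ ≤ (x+F+h+A+(k+1)).choose (k+1) := hup _
    have htel := choose_telescope k (show x+F+(k+1) ≤ x+F+h+A+(k+1) by omega)
    have hsum_le : P * (h * T x)
        ≤ ∑ m ∈ Finset.Ico (x+F+(k+1)) (x+F+h+A+(k+1)), m.choose k := by omega
    calc Nat.factorial k * (P * (h * T x))
        ≤ Nat.factorial k * ∑ m ∈ Finset.Ico (x+F+(k+1)) (x+F+h+A+(k+1)), m.choose k :=
          Nat.mul_le_mul_left _ hsum_le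
      _ = ∑ m ∈ Finset.Ico (x+F+(k+1)) (x+F+h+A+(k+1)), Nat.factorial k * m.choose k :=
          Finset.mul_sum _ _ _
      _ = ∑ m ∈ Finset.Ico (x+F+(k+1)) (x+F+h+A+(k+1)), m.descFactorial k := by
          exact Finset.sum_congr rfl fun m _ => (Nat.descFactorial_eq_factorial_mul_choose m k).symm
      _ ≤ ∑ m ∈ Finset.Ico (x+F+(k+1)) (x+F+h+A+(k+1)), (x + (F+h+A+(k+1)))^k := by
          apply Finset.sum_le_sum
          intro m hm
          rw [Finset.mem_Ico] at hm
          exact le_trans (Nat.descFactorial_le_pow m k) (Nat.pow_le_pow_left (by omega) k)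
      _ = (h + A) * (x + (F+h+A+(k+1)))^k := by
          rw [Finset.sum_const, Nat.card_Ico, smul_eq_mul]; congr 1; omega
  -- key lower bound
  have keyLB : ∀ h z : ℕ, A ≤ h →
      (h - A) * z^k ≤ Nat.factorial k * (P * (h * T (z + (F+h)))) := by
    intro h z hAh
    have step1 : (solL a (z+h)).card ≤ (solL a z).card + h * T (z+(F+h)) := by
      rw [hsplit z (z+h) (by omega)]
      apply Nat.add_le_add_left
      have hcount : h * T (z+(F+h)) = (Finset.Ico (z+1) (z+h+1)).card • (T (z+(F+h))) := by
        rw [Nat.card_Ico, smul_eq_mul]; congr 1; omega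
      rw [hcount]
      apply Finset.sum_le_card_nsmul
      intro y hy
      rw [Finset.mem_Ico] at hy
      rw [hTcard]
      exact hmono y (z+(F+h)) (by omega)
    have step2 : (z+h+(k+1)).choose (k+1)
        ≤ (z+A+(k+1)).choose (k+1) + P * (h * T (z+(F+h))) := by
      calc (z+h+(k+1)).choose (k+1) ≤ P * (solL a (z+h)).card := hlo _
        _ ≤ P * ((solL a z).card + h * T (z+(F+h))) := Nat.mul_le_mul_left _ step1
        _ = P * (solL a z).card + P * (h * T (z+(F+h))) := Nat.mul_add _ _ _
        _ ≤ (z+A+(k+1)).choose (k+1) + P * (h * T (z+(F+h))) :=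
            Nat.add_le_add_right (hup _) _
    have htel := choose_telescope k (show z+A+(k+1) ≤ z+h+(k+1) by omega)
    have hsum_ge : ∑ m ∈ Finset.Ico (z+A+(k+1)) (z+h+(k+1)), m.choose k
        ≤ P * (h * T (z+(F+h))) := by omega
    calc (h - A) * z^k
        = ∑ m ∈ Finset.Ico (z+A+(k+1)) (z+h+(k+1)), z^k := by
          rw [Finset.sum_const, Nat.card_Ico, smul_eq_mul]; congr 1; omega
      _ ≤ ∑ m ∈ Finset.Ico (z+A+(k+1)) (z+h+(k+1)), m.descFactorial k := by
          apply Finset.sum_le_sum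
          intro m hm
          rw [Finset.mem_Ico] at hm
          exact le_trans (Nat.pow_le_pow_left (by omega) k) (Nat.pow_sub_le_descFactorial m k)
      _ = ∑ m ∈ Finset.Ico (z+A+(k+1)) (z+h+(k+1)), Nat.factorial k * m.choose k := by
          exact Finset.sum_congr rfl fun m _ => Nat.descFactorial_eq_factorial_mul_choose m k
      _ = Nat.factorial k * ∑ m ∈ Finset.Ico (z+A+(k+1)) (z+h+(k+1)), m.choose k :=
          (Finset.mul_sum _ _ _).symm
      _ ≤ Nat.factorial k * (P * (h * T (z+(F+h)))) := Nat.mul_le_mul_left _ hsum_ge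
  -- real analysis endgame
  set Q : ℝ := (Nat.factorial k : ℝ) * P with hQ
  have hQpos : (0:ℝ) < Q := by
    rw [hQ]
    exact mul_pos (by exact_mod_cast Nat.factorial_pos k) (by exact_mod_cast hPpos)
  rw [tendsto_order]
  constructor
  · -- lower bound direction
    intro c hc
    have hcQ : c * Q < 1 := (lt_div_iff₀ hQpos).1 hc
    have hpos1 : (0:ℝ) < 1 - c * Q := by linarith
    obtain ⟨h, hh⟩ := exists_nat_gt (max (A:ℝ) ((A:ℝ)/(1 - c*Q)))
    have hhA : (A:ℝ) < h := (le_max_left _ _).trans_lt hh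
    have hAh : A ≤ h := by exact_mod_cast hhA.le
    have hhpos : (0:ℝ) < h := lt_of_le_of_lt (Nat.cast_nonneg A) hhA
    have hA2 : (A:ℝ) < (1 - c*Q) * h := by
      have h2 := (le_max_right (A:ℝ) ((A:ℝ)/(1-c*Q))).trans_lt hh
      calc (A:ℝ) = (A/(1-c*Q)) * (1-c*Q) := by field_simp
        _ < h * (1-c*Q) := mul_lt_mul_of_pos_right h2 hpos1
        _ = (1-c*Q) * h := mul_comm _ _
    have hQh : (0:ℝ) < Q * h := mul_pos hQpos hhpos
    have hcl : c < ((h:ℝ) - A)/(Q*h) := by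
      rw [lt_div_iff₀ hQh]
      nlinarith [hA2]
    have hφ : Tendsto (fun x : ℕ => (((h:ℝ) - A)/(Q*h)) * (1 - ((F:ℝ)+h)/(x:ℝ))^k)
        atTop (nhds (((h:ℝ) - A)/(Q*h))) := by
      have h0' : Tendsto (fun x : ℕ => ((F:ℝ)+h)/(x:ℝ)) atTop (nhds 0) :=
        tendsto_const_div_atTop_nhds_zero_nat _
      have h1' : Tendsto (fun x : ℕ => 1 - ((F:ℝ)+h)/(x:ℝ)) atTop (nhds 1) := by
        simpa using tendsto_const_nhds.sub h0'
      have h2' := h1'.pow k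
      simp only [one_pow] at h2'
      simpa using tendsto_const_nhds.mul h2'
    filter_upwards [hφ.eventually_const_lt hcl, eventually_ge_atTop (F+h+1)] with x hcφ hx
    refine hcφ.trans_le ?_
    have hxR : (1:ℝ) ≤ (x:ℝ) := by exact_mod_cast (by omega : 1 ≤ x)
    have hx0 : (x:ℝ) ≠ 0 := by intro h'; rw [h'] at hxR; linarith
    have hxk : (0:ℝ) < (x:ℝ)^k := by positivity
    have hcast : ((h:ℝ) - A) * ((x:ℝ) - ((F:ℝ)+h))^k ≤ Q * h * T x := by
      have hz := keyLB h (x - (F+h)) hAh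
      rw [Nat.sub_add_cancel (by omega : F+h ≤ x)] at hz
      have hz' := (Nat.cast_le (α := ℝ)).2 hz
      push_cast [Nat.cast_sub hAh, Nat.cast_sub (show F+h ≤ x by omega)] at hz'
      calc ((h:ℝ) - A) * ((x:ℝ) - ((F:ℝ)+h))^k
          ≤ (Nat.factorial k : ℝ) * ((P:ℝ) * ((h:ℝ) * (T x : ℝ))) := hz'
        _ = Q * h * T x := by rw [hQ]; ring
    have heq : (((h:ℝ) - A)/(Q*h)) * (1 - ((F:ℝ)+h)/(x:ℝ))^k
        = (((h:ℝ) - A) * ((x:ℝ) - ((F:ℝ)+h))^k) / (Q * h * (x:ℝ)^k) := by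
      rw [show (1 : ℝ) - ((F:ℝ)+h)/(x:ℝ) = ((x:ℝ) - ((F:ℝ)+h))/(x:ℝ) by field_simp]
      rw [div_pow]
      field_simp
    rw [heq, div_le_div_iff₀ (by positivity) hxk]
    nlinarith [mul_le_mul_of_nonneg_right hcast hxk.le]
  · -- upper bound direction
    intro c hc
    have hcQ : 1 < c * Q := by
      have := (div_lt_iff₀ hQpos).1 hc
      linarith
    have hpos1 : (0:ℝ) < c * Q - 1 := by linarith
    obtain ⟨h, hh⟩ := exists_nat_gt (max 1 ((A:ℝ)/(c*Q - 1)))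
    have hh1 : (1:ℝ) < h := (le_max_left _ _).trans_lt hh
    have hhpos : (0:ℝ) < h := by linarith
    have hA2 : (A:ℝ) < (c*Q - 1) * h := by
      have h2 := (le_max_right (1:ℝ) ((A:ℝ)/(c*Q-1))).trans_lt hh
      calc (A:ℝ) = (A/(c*Q-1)) * (c*Q-1) := by field_simp
        _ < h * (c*Q-1) := mul_lt_mul_of_pos_right h2 hpos1
        _ = (c*Q-1) * h := mul_comm _ _
    have hQh : (0:ℝ) < Q * h := mul_pos hQpos hhpos
    have hlc : ((h:ℝ) + A)/(Q*h) < c := by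
      rw [div_lt_iff₀ hQh]
      nlinarith [hA2]
    have hφ : Tendsto (fun x : ℕ => (((h:ℝ) + A)/(Q*h)) * (1 + (((F+h+A+(k+1):ℕ)):ℝ)/(x:ℝ))^k)
        atTop (nhds (((h:ℝ) + A)/(Q*h))) := by
      have h0' : Tendsto (fun x : ℕ => (((F+h+A+(k+1):ℕ)):ℝ)/(x:ℝ)) atTop (nhds 0) :=
        tendsto_const_div_atTop_nhds_zero_nat _
      have h1' : Tendsto (fun x : ℕ => 1 + (((F+h+A+(k+1):ℕ)):ℝ)/(x:ℝ)) atTop (nhds 1) := by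
        simpa using tendsto_const_nhds.add h0'
      have h2' := h1'.pow k
      simp only [one_pow] at h2'
      simpa using tendsto_const_nhds.mul h2'
    filter_upwards [hφ.eventually_lt_const hlc, eventually_ge_atTop 1] with x hφc hx
    refine lt_of_le_of_lt ?_ hφc
    have hxR : (1:ℝ) ≤ (x:ℝ) := by exact_mod_cast hx
    have hx0 : (x:ℝ) ≠ 0 := by intro h'; rw [h'] at hxR; linarith
    have hxk : (0:ℝ) < (x:ℝ)^k := by positivity
    have hcast : Q * h * T x ≤ ((h:ℝ) + A) * ((x:ℝ) + (((F+h+A+(k+1):ℕ)):ℝ))^k := by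
      have hz := keyUB h x
      have hz' := (Nat.cast_le (α := ℝ)).2 hz
      push_cast at hz'
      calc Q * h * T x = (Nat.factorial k : ℝ) * ((P:ℝ) * ((h:ℝ) * (T x : ℝ))) := by
            rw [hQ]; ring
        _ ≤ ((h:ℝ) + A) * ((x:ℝ) + (((F+h+A+(k+1):ℕ)):ℝ))^k := by push_cast; linarith [hz']
    have heq : (((h:ℝ) + A)/(Q*h)) * (1 + (((F+h+A+(k+1):ℕ)):ℝ)/(x:ℝ))^k
        = (((h:ℝ) + A) * ((x:ℝ) + (((F+h+A+(k+1):ℕ)):ℝ))^k) / (Q * h * (x:ℝ)^k) := by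
      rw [show (1 : ℝ) + (((F+h+A+(k+1):ℕ)):ℝ)/(x:ℝ)
          = ((x:ℝ) + (((F+h+A+(k+1):ℕ)):ℝ))/(x:ℝ) by field_simp]
      rw [div_pow]
      field_simp
    rw [heq, div_le_div_iff₀ hxk (by positivity)]
    nlinarith [mul_le_mul_of_nonneg_right hcast hxk.le]
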